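/- Each of the three matrices A_f = [[1,0],[2,1]], A_g = [[0,1],[−1,2]], A_h = [[0,1],[1,2]] has determinant ±1, and each maps the set of column vectors (r,s)ᵀ with 0 < r < s, gcd(r,s) = 1, and r + s odd into itself, additionally with the property that the image (p,q)ᵀ satisfies p + q > r + s. -/

import Mathlib

def Af : Matrix (Fin 2) (Fin 2) ℤ := !![1, 0; 2, 1]
def Ag : Matrix (Fin 2) (Fin 2) ℤ := !![0, 1; -1, 2]
def Ah : Matrix (Fin 2) (Fin 2) ℤ := !![0, 1; 1, 2]

theorem lift_matrices_properties :
    ∀ A ∈ ({Af, Ag, Ah} : Set (Matrix (Fin 2) (Fin 2) ℤ)),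
      (A.det = 1 ∨ A.det = -1) ∧
      ∀ r s : ℤ, 0 < r → r < s → IsCoprime r s → Odd (r + s) →
        0 < A.mulVec ![r, s] 0 ∧
        A.mulVec ![r, s] 0 < A.mulVec ![r, s] 1 ∧
        IsCoprime (A.mulVec ![r, s] 0) (A.mulVec ![r, s] 1) ∧
        Odd (A.mulVec ![r, s] 0 + A.mulVec ![r, s] 1) ∧
        r + s < A.mulVec ![r, s] 0 + A.mulVec ![r, s] 1 := by
  rintro A (rfl | rfl | rfl)
  · refine ⟨by left; simp [Af, Matrix.det_fin_two], ?_⟩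
    intro r s hr hrs hc hodd
    simp [Af, Matrix.mulVec, dotProduct, Fin.sum_univ_two,
      Matrix.cons_val', Matrix.cons_val_zero, Matrix.cons_val_one, Matrix.head_cons,
      Matrix.empty_val', Matrix.cons_val_fin_one, Matrix.head_fin_const]
    refine ⟨by linarith, by linarith, ?_, ?_, by linarith⟩
    · have := hc.add_mul_left_right 2
      exact hc
    · obtain ⟨k, hk⟩ := hodd
      exact ⟨k + r, by linarith⟩
  · refine ⟨by left; simp [Ag, Matrix.det_fin_two], ?_⟩
    intro r s hr hrs hc hodd
    simp [Ag, Matrix.mulVec, dotProduct, Fin.sum_univ_two,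
      Matrix.cons_val', Matrix.cons_val_zero, Matrix.cons_val_one, Matrix.head_cons,
      Matrix.empty_val', Matrix.cons_val_fin_one, Matrix.head_fin_const]
    refine ⟨by linarith, by linarith, ?_, ?_, by linarith⟩
    · have := (hc.symm.neg_right).add_mul_left_right 2
      exact hc.symm.neg_right
    · obtain ⟨k, hk⟩ := hodd
      exact ⟨k + s - r, by linarith⟩
  · refine ⟨by right; simp [Ah, Matrix.det_fin_two], ?_⟩
    intro r s hr hrs hc hodd
    simp [Ah, Matrix.mulVec, dotProduct, Fin.sum_univ_two,
      Matrix.cons_val', Matrix.cons_val_zero, Matrix.cons_val_one, Matrix.head_cons,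
      Matrix.empty_val', Matrix.cons_val_fin_one, Matrix.head_fin_const]
    refine ⟨by linarith, by linarith, ?_, ?_, by linarith⟩
    · have := hc.symm.add_mul_left_right 2
      exact hc.symm
    · obtain ⟨k, hk⟩ := hodd
      exact ⟨k + s, by linarith⟩
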